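/- Let g : ℝ → ℝ be a step function defined by a strictly increasing sequence of points (x_i)_{i∈ℤ} with g(x) = g_i on [x_{i-1/2}, x_{i+1/2}), where only finitely many g_i are nonzero. Then the total variation of g, defined as the supremum over C¹ compactly supported test functions φ with ‖φ‖_∞ ≤ 1 of ∫ φ'(x) g(x) dx, equals ∑_{i∈ℤ} |g_{i+1} - g_i|. -/

import Mathlib

open MeasureTheory

lemma sftv_aux_integral (φ : ℝ → ℝ) (hφ : ContDiff ℝ 1 φ) (a b c : ℝ) (hab : a ≤ b) :
    ∫ y, Set.indicator (Set.Ico a b) (fun z => deriv φ z * c) y = (φ b - φ a) * c := by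
  rw [MeasureTheory.integral_indicator measurableSet_Ico,
    MeasureTheory.integral_Ico_eq_integral_Ioo, ← MeasureTheory.integral_Ioc_eq_integral_Ioo,
    ← intervalIntegral.integral_of_le hab, intervalIntegral.integral_mul_const]
  congr 1
  exact intervalIntegral.integral_deriv_eq_sub (fun z _ => hφ.differentiable one_ne_zero z)
    ((hφ.continuous_deriv le_rfl).intervalIntegrable a b)

lemma sftv_aux_key (m : ℤ → ℝ) (hm : StrictMono m) (g : ℤ → ℝ) (F : Finset ℤ)
    (hF : ∀ i, g i ≠ 0 → i ∈ F) (G : ℝ → ℝ)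
    (hG : ∀ i, ∀ y ∈ Set.Ico (m (i - 1)) (m i), G y = g i)
    (hcov : ∀ y : ℝ, ∃ i, y ∈ Set.Ico (m (i - 1)) (m i))
    (φ : ℝ → ℝ) (hφ : ContDiff ℝ 1 φ) (hφc : HasCompactSupport φ) :
    ∫ y, deriv φ y * G y = ∑ i ∈ F, g i * (φ (m i) - φ (m (i - 1))) := by
  classical
  have huniq : ∀ (y : ℝ) (j k : ℤ), y ∈ Set.Ico (m (j - 1)) (m j) →
      y ∈ Set.Ico (m (k - 1)) (m k) → j = k := by
    intro y j k hj hk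
    by_contra hne
    rcases lt_or_gt_of_ne hne with h | h
    · have h1 : m j ≤ m (k - 1) := hm.monotone (by omega)
      have h2 := hj.2; have h3 := hk.1; linarith
    · have h1 : m k ≤ m (j - 1) := hm.monotone (by omega)
      have h2 := hk.2; have h3 := hj.1; linarith
  have hrep : (fun y => deriv φ y * G y) =
      fun y => ∑ i ∈ F, Set.indicator (Set.Ico (m (i - 1)) (m i)) (fun z => deriv φ z * g i) y := by
    funext y
    obtain ⟨i₀, hi₀⟩ := hcov y
    have hGy := hG i₀ y hi₀
    by_cases h0 : i₀ ∈ F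
    · rw [Finset.sum_eq_single_of_mem i₀ h0, Set.indicator_of_mem hi₀, hGy]
      intro j _ hne
      exact Set.indicator_of_notMem (fun hy => hne (huniq y j i₀ hy hi₀)) _
    · have hg0 : g i₀ = 0 := by by_contra h; exact h0 (hF i₀ h)
      rw [hGy, hg0, mul_zero]
      symm
      apply Finset.sum_eq_zero
      intro j hj
      by_cases hy : y ∈ Set.Ico (m (j - 1)) (m j)
      · have hji : j = i₀ := huniq y j i₀ hy hi₀
        subst hji; exact absurd hj h0
      · exact Set.indicator_of_notMem hy _
  rw [hrep, MeasureTheory.integral_finset_sum]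
  · apply Finset.sum_congr rfl
    intro i _
    rw [sftv_aux_integral φ hφ _ _ _ (hm.monotone (by omega)), mul_comm]
  · intro i _
    apply MeasureTheory.Integrable.indicator _ measurableSet_Ico
    exact ((hφ.continuous_deriv le_rfl).mul continuous_const).integrable_of_hasCompactSupport
      hφc.deriv.mul_right

lemma sftv_aux_abel (g : ℤ → ℝ) (A : ℤ → ℝ) (F F' : Finset ℤ) (hFF' : F ⊆ F')
    (hF : ∀ i, g i ≠ 0 → i ∈ F) (hF' : ∀ i, i + 1 ∈ F → i ∈ F') :
    ∑ i ∈ F, g i * (A i - A (i - 1)) = ∑ i ∈ F', (g i - g (i + 1)) * A i := by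
  classical
  have h1 : ∑ i ∈ F, g i * (A i - A (i - 1)) = ∑ i ∈ F', g i * (A i - A (i - 1)) := by
    apply Finset.sum_subset hFF'
    intro i _ hiF
    have hgi : g i = 0 := by by_contra h; exact hiF (hF i h)
    simp [hgi]
  have h3 : ∑ i ∈ F', g i * A (i - 1) = ∑ i ∈ F', g (i + 1) * A i := by
    have himg : ∑ i ∈ F', g i * A (i - 1) = ∑ j ∈ F'.image (· - 1), g (j + 1) * A j := by
      rw [Finset.sum_image (by intro a _ b _ h; simp only at h; omega)]
      apply Finset.sum_congr rfl
      intro i _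
      rw [show i - 1 + 1 = i from by omega]
    rw [himg]
    have hsub1 : F'.image (· - 1) ⊆ F' ∪ F'.image (· - 1) := Finset.subset_union_right
    have hsub2 : F' ⊆ F' ∪ F'.image (· - 1) := Finset.subset_union_left
    rw [Finset.sum_subset hsub1, ← Finset.sum_subset hsub2]
    · intro j _ hjF'
      have hgj : g (j + 1) = 0 := by
        by_contra h
        exact hjF' (hF' j (hF _ h))
      simp [hgj]
    · intro j _ hjimg
      have hgj : g (j + 1) = 0 := by
        by_contra h
        have hmem : j + 1 ∈ F' := hFF' (hF _ h)
        exact hjimg (Finset.mem_image.mpr ⟨j + 1, hmem, by omega⟩)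
      simp [hgj]
  rw [h1]
  simp only [mul_sub, sub_mul, Finset.sum_sub_distrib]
  rw [h3]

/-- Total variation of a finitely supported step function equals the sum of jumps. -/
theorem step_function_total_variation
    (x : ℤ → ℝ) (hx : StrictMono x)
    (g : ℤ → ℝ) (hg : (Function.support g).Finite)
    (G : ℝ → ℝ)
    (hG : ∀ i : ℤ, ∀ y ∈ Set.Ico ((x (i - 1) + x i) / 2) ((x i + x (i + 1)) / 2), G y = g i)
    (hcov : ∀ y : ℝ, ∃ i : ℤ, y ∈ Set.Ico ((x (i - 1) + x i) / 2) ((x i + x (i + 1)) / 2)) :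
    sSup {v : ℝ | ∃ φ : ℝ → ℝ, ContDiff ℝ 1 φ ∧ HasCompactSupport φ ∧
        (∀ y, |φ y| ≤ 1) ∧ v = ∫ y, deriv φ y * G y} =
      ∑' i : ℤ, |g (i + 1) - g i| := by
  classical
  set m : ℤ → ℝ := fun i => (x i + x (i + 1)) / 2 with hmdef
  have hmid : ∀ i : ℤ, ((x (i - 1) + x i) / 2) = m (i - 1) := by
    intro i
    simp only [hmdef]
    rw [sub_add_cancel]
  have hm : StrictMono m := by
    intro a b hab
    have h1 := hx hab
    have h2 := hx (show a + 1 < b + 1 by omega)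
    have : (x a + x (a + 1)) / 2 < (x b + x (b + 1)) / 2 := by linarith
    exact this
  have hG' : ∀ i, ∀ y ∈ Set.Ico (m (i - 1)) (m i), G y = g i := by
    intro i y hy
    exact hG i y (by rw [hmid i]; exact hy)
  have hcov' : ∀ y : ℝ, ∃ i, y ∈ Set.Ico (m (i - 1)) (m i) := by
    intro y
    obtain ⟨i, hi⟩ := hcov y
    rw [hmid i] at hi
    exact ⟨i, hi⟩
  set F : Finset ℤ := hg.toFinset with hFdef
  have hFmem : ∀ i, g i ≠ 0 → i ∈ F := fun i h => hg.mem_toFinset.mpr h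
  set F' : Finset ℤ := F ∪ F.image (· - 1) with hF'def
  have hFF' : F ⊆ F' := Finset.subset_union_left
  have hF'1 : ∀ i, i + 1 ∈ F → i ∈ F' := fun i h =>
    Finset.mem_union_right _ (Finset.mem_image.mpr ⟨i + 1, h, by omega⟩)
  have htsum : ∑' i : ℤ, |g (i + 1) - g i| = ∑ i ∈ F', |g (i + 1) - g i| := by
    apply tsum_eq_sum
    intro i hi
    have h1 : g i = 0 := by by_contra h; exact hi (hFF' (hFmem i h))
    have h2 : g (i + 1) = 0 := by by_contra h; exact hi (hF'1 i (hFmem _ h))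
    simp [h1, h2]
  have hval : ∀ φ : ℝ → ℝ, ContDiff ℝ 1 φ → HasCompactSupport φ →
      ∫ y, deriv φ y * G y = ∑ i ∈ F', (g i - g (i + 1)) * φ (m i) := by
    intro φ h1 h2
    rw [sftv_aux_key m hm g F hFmem G hG' hcov' φ h1 h2]
    exact sftv_aux_abel g (fun i => φ (m i)) F F' hFF' hFmem hF'1
  -- separation constant
  have hδ : ∃ δ : ℝ, 0 < δ ∧ ∀ i ∈ F', ∀ j ∈ F', i ≠ j → 3 * δ ≤ |m i - m j| := by
    set P := (F' ×ˢ F').filter (fun p => p.1 ≠ p.2) with hP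
    by_cases hPe : P.Nonempty
    · refine ⟨P.inf' hPe (fun p => |m p.1 - m p.2|) / 3, ?_, ?_⟩
      · have hpos : ∀ p ∈ P, 0 < |m p.1 - m p.2| := by
          intro p hp
          have hne : p.1 ≠ p.2 := (Finset.mem_filter.mp hp).2
          exact abs_pos.mpr (sub_ne_zero.mpr fun h => hne (hm.injective h))
        have := (Finset.lt_inf'_iff hPe).mpr hpos
        linarith
      · intro i hi j hj hij
        have hp : (i, j) ∈ P :=
          Finset.mem_filter.mpr ⟨Finset.mem_product.mpr ⟨hi, hj⟩, hij⟩
        have := Finset.inf'_le (f := fun p => |m p.1 - m p.2|) hp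
        linarith
    · refine ⟨1, one_pos, fun i hi j hj hij => absurd ?_ hPe⟩
      exact ⟨(i, j), Finset.mem_filter.mpr ⟨Finset.mem_product.mpr ⟨hi, hj⟩, hij⟩⟩
  obtain ⟨δ, hδ0, hδsep⟩ := hδ
  set ψ : (i : ℤ) → ContDiffBump (m i) := fun i => ⟨δ / 2, δ, by linarith, by linarith⟩ with hψdef
  set s : ℤ → ℝ := fun i => if 0 ≤ g i - g (i + 1) then (1 : ℝ) else -1 with hsdef
  have hs1 : ∀ i, |s i| = 1 := by
    intro i
    simp only [hsdef]
    split <;> simp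
  have hs2 : ∀ i, (g i - g (i + 1)) * s i = |g i - g (i + 1)| := by
    intro i
    simp only [hsdef]
    by_cases h : 0 ≤ g i - g (i + 1)
    · rw [if_pos h, mul_one, abs_of_nonneg h]
    · rw [if_neg h, abs_of_neg (not_le.mp h)]; ring
  set Φ : ℝ → ℝ := fun y => ∑ i ∈ F', s i * ψ i y with hΦdef
  have hψ0 : ∀ i ∈ F', ∀ j ∈ F', i ≠ j → ∀ y ∈ Metric.ball (m i) δ, ψ j y = 0 := by
    intro i hi j hj hij y hy
    apply ContDiffBump.zero_of_le_dist
    show δ ≤ dist y (m j)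
    have h1 : dist (m i) (m j) = |m i - m j| := Real.dist_eq _ _
    have h2 : 3 * δ ≤ dist (m i) (m j) := h1 ▸ hδsep i hi j hj hij
    have h3 : dist y (m i) < δ := Metric.mem_ball.mp hy
    have h4 := dist_triangle (m i) y (m j)
    rw [dist_comm (m i) y] at h4
    linarith
  have hΦsmooth : ContDiff ℝ 1 Φ := by
    apply ContDiff.sum
    intro i _
    exact contDiff_const.mul (ψ i).contDiff
  have hΦsupp : HasCompactSupport Φ := by
    rw [hΦdef]
    induction F' using Finset.induction with
    | empty => simp only [Finset.sum_empty]; exact HasCompactSupport.zero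
    | @insert a t hat ih =>
      simp only [Finset.sum_insert hat]
      exact ((ψ a).hasCompactSupport.mul_left).add ih
  have hΦbound : ∀ y, |Φ y| ≤ 1 := by
    intro y
    by_cases hy : ∃ i ∈ F', ψ i y ≠ 0
    · obtain ⟨i₀, hi₀, hne⟩ := hy
      have hyb : y ∈ Metric.ball (m i₀) δ := by
        have := Function.mem_support.mpr hne
        rwa [(ψ i₀).support_eq] at this
      have hsum : Φ y = s i₀ * ψ i₀ y := by
        apply Finset.sum_eq_single_of_mem i₀ hi₀
        intro j hj hj'
        rw [hψ0 i₀ hi₀ j hj (Ne.symm hj') y hyb, mul_zero]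
      rw [hsum, abs_mul, hs1 i₀, one_mul,
        abs_of_nonneg ((ψ i₀).nonneg' y)]
      exact (ψ i₀).le_one
    · push_neg at hy
      have hsum : Φ y = 0 := Finset.sum_eq_zero fun i hi => by rw [hy i hi, mul_zero]
      rw [hsum]; simp
  have hΦval : ∀ i ∈ F', Φ (m i) = s i := by
    intro i hi
    have hsum : Φ (m i) = s i * ψ i (m i) := by
      apply Finset.sum_eq_single_of_mem i hi
      intro j hj hj'
      rw [hψ0 i hi j hj (Ne.symm hj') (m i) (Metric.mem_ball_self hδ0), mul_zero]
    rw [hsum, (ψ i).one_of_mem_closedBall (Metric.mem_closedBall_self (ψ i).rIn_pos.le), mul_one]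
  have hvalΦ : ∫ y, deriv Φ y * G y = ∑ i ∈ F', |g (i + 1) - g i| := by
    rw [hval Φ hΦsmooth hΦsupp]
    apply Finset.sum_congr rfl
    intro i hi
    rw [hΦval i hi, hs2 i, abs_sub_comm]
  rw [htsum]
  apply IsGreatest.csSup_eq
  constructor
  · exact ⟨Φ, hΦsmooth, hΦsupp, hΦbound, hvalΦ.symm⟩
  · rintro v ⟨φ, h1, h2, h3, rfl⟩
    rw [hval φ h1 h2]
    apply Finset.sum_le_sum
    intro i _
    calc (g i - g (i + 1)) * φ (m i) ≤ |(g i - g (i + 1)) * φ (m i)| := le_abs_self _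
      _ = |g i - g (i + 1)| * |φ (m i)| := abs_mul _ _
      _ ≤ |g i - g (i + 1)| * 1 := mul_le_mul_of_nonneg_left (h3 _) (abs_nonneg _)
      _ = |g (i + 1) - g i| := by rw [mul_one, abs_sub_comm]
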